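/- For every natural number n divisible by 3, the single strip Sₙ is equivalent to the zero game modulo the universe of Partizan Kayles positions: o⁻(Sₙ + X) = o⁻(X) for all Partizan Kayles positions X. -/
import Mathlib


/-- Add a strip of length `k` to a position (strips of length 0 are discarded). -/
def addStrip (m : Multiset ℕ) (k : ℕ) : Multiset ℕ := if k = 0 then m else k ::ₘ m

/-- Left removes one square from a strip of length `n ≥ 1`, leaving strips `i` and `n-1-i`. -/
def LeftMove (G G' : Multiset ℕ) : Prop :=
  ∃ n ∈ G, ∃ i, i + 1 ≤ n ∧ G' = addStrip (addStrip (G.erase n) i) (n - 1 - i)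

/-- Right removes two adjacent squares from a strip of length `n ≥ 2`, leaving `i` and `n-2-i`. -/
def RightMove (G G' : Multiset ℕ) : Prop :=
  ∃ n ∈ G, ∃ i, i + 2 ≤ n ∧ G' = addStrip (addStrip (G.erase n) i) (n - 2 - i)

mutual
  /-- Misère play: Left, to move, wins (a player unable to move wins). -/
  inductive LeftWinsMover : Multiset ℕ → Prop
    | cannot (G : Multiset ℕ) : (¬ ∃ G', LeftMove G G') → LeftWinsMover G
    | move (G G' : Multiset ℕ) : LeftMove G G' → LeftWinsWaiter G' → LeftWinsMover G
  /-- Misère play: Left wins with Right to move. -/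
  inductive LeftWinsWaiter : Multiset ℕ → Prop
    | intro (G : Multiset ℕ) : (∃ G', RightMove G G') →
        (∀ G', RightMove G G' → LeftWinsMover G') → LeftWinsWaiter G
end

inductive Outcome | L | N | P | R
  deriving DecidableEq

open Classical in
/-- The misère outcome `o⁻(G)`. -/
noncomputable def outcome (G : Multiset ℕ) : Outcome :=
  if LeftWinsMover G then (if LeftWinsWaiter G then Outcome.L else Outcome.N)
  else (if LeftWinsWaiter G then Outcome.P else Outcome.R)

/-- The partial order on outcomes: `L` greatest, `R` least, `N` and `P` incomparable. -/
def Outcome.le (a b : Outcome) : Prop := a = b ∨ a = Outcome.R ∨ b = Outcome.L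

/-- `pos k j` is the position `kS₁ + jS₂`. -/
def pos (k j : ℕ) : Multiset ℕ := Multiset.replicate k 1 + Multiset.replicate j 2

def d1 (x : ℕ) : ℕ := if x % 3 = 1 then 1 else 0
def d2 (x : ℕ) : ℕ := if x % 3 = 2 then 1 else 0
def c1 (G : Multiset ℕ) : ℕ := (G.filter (fun x => x % 3 = 1)).card
def c2 (G : Multiset ℕ) : ℕ := (G.filter (fun x => x % 3 = 2)).card

lemma dcases (x : ℕ) : (x % 3 = 0 ∧ d1 x = 0 ∧ d2 x = 0) ∨ (x % 3 = 1 ∧ d1 x = 1 ∧ d2 x = 0)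
    ∨ (x % 3 = 2 ∧ d1 x = 0 ∧ d2 x = 1) := by
  have h3 : x % 3 = 0 ∨ x % 3 = 1 ∨ x % 3 = 2 := by omega
  rcases h3 with h|h|h <;> simp [d1, d2, h]

lemma c1_cons (a : ℕ) (s : Multiset ℕ) : c1 (a ::ₘ s) = d1 a + c1 s := by
  simp only [c1, d1, Multiset.filter_cons]
  split_ifs <;> simp <;> ring

lemma c2_cons (a : ℕ) (s : Multiset ℕ) : c2 (a ::ₘ s) = d2 a + c2 s := by
  simp only [c2, d2, Multiset.filter_cons]
  split_ifs <;> simp <;> ring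

lemma c1_addStrip (m : Multiset ℕ) (k : ℕ) : c1 (addStrip m k) = d1 k + c1 m := by
  unfold addStrip
  split_ifs with h
  · simp [h, d1]
  · exact c1_cons k m

lemma c2_addStrip (m : Multiset ℕ) (k : ℕ) : c2 (addStrip m k) = d2 k + c2 m := by
  unfold addStrip
  split_ifs with h
  · simp [h, d2]
  · exact c2_cons k m

lemma sum_addStrip (m : Multiset ℕ) (k : ℕ) : (addStrip m k).sum = k + m.sum := by
  unfold addStrip
  split_ifs with h
  · simp [h]
  · simp

lemma move_eqs {G : Multiset ℕ} {n : ℕ} (hn : n ∈ G) (i j : ℕ) :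
    c1 (addStrip (addStrip (G.erase n) i) j) + d1 n = c1 G + d1 i + d1 j ∧
    c2 (addStrip (addStrip (G.erase n) i) j) + d2 n = c2 G + d2 i + d2 j ∧
    (addStrip (addStrip (G.erase n) i) j).sum + n = G.sum + i + j := by
  have hG : n ::ₘ G.erase n = G := Multiset.cons_erase hn
  have h1 : c1 G = d1 n + c1 (G.erase n) := by
    conv_lhs => rw [← hG]
    rw [c1_cons]
  have h2 : c2 G = d2 n + c2 (G.erase n) := by
    conv_lhs => rw [← hG]
    rw [c2_cons]
  have h3 : G.sum = n + (G.erase n).sum := by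
    conv_lhs => rw [← hG]
    rw [Multiset.sum_cons]
  refine ⟨?_, ?_, ?_⟩
  · rw [c1_addStrip, c1_addStrip, h1]; ring
  · rw [c2_addStrip, c2_addStrip, h2]; ring
  · rw [sum_addStrip, sum_addStrip, h3]; ring

def PM (G : Multiset ℕ) : Prop := c1 G ≤ c2 G ∧ (c2 G - c1 G) % 3 = 0
def PW (G : Multiset ℕ) : Prop := c1 G < c2 G ∧ (c2 G - c1 G) % 3 = 1

lemma c1_eq_zero {G : Multiset ℕ} (h : ¬∃ x ∈ G, x % 3 = 1) : c1 G = 0 := by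
  simp only [c1, Multiset.card_eq_zero, Multiset.filter_eq_nil]
  intro a ha hc
  exact h ⟨a, ha, hc⟩

lemma one_le_c2 {G : Multiset ℕ} {n : ℕ} (hn : n ∈ G) (h : n % 3 = 2) : 1 ≤ c2 G := by
  have h1 : n ∈ G.filter (fun x => x % 3 = 2) := Multiset.mem_filter.2 ⟨hn, h⟩
  have h2 := Multiset.card_pos_iff_exists_mem.2 ⟨n, h1⟩
  unfold c2
  omega

lemma exists_of_c2 {G : Multiset ℕ} (h : 1 ≤ c2 G) : ∃ x ∈ G, x % 3 = 2 := by
  have : 0 < Multiset.card (G.filter (fun x => x % 3 = 2)) := h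
  obtain ⟨a, ha⟩ := Multiset.card_pos_iff_exists_mem.1 this
  rw [Multiset.mem_filter] at ha
  exact ⟨a, ha.1, ha.2⟩

lemma main : ∀ N : ℕ, ∀ G : Multiset ℕ, G.sum < N →
    ((LeftWinsMover G ↔ PM G) ∧ (LeftWinsWaiter G ↔ PW G)) := by
  intro N
  induction N with
  | zero => intro G hG; exact absurd hG (Nat.not_lt_zero _)
  | succ N ih =>
    intro G hG
    refine ⟨⟨?_, ?_⟩, ?_, ?_⟩
    · -- LeftWinsMover → PM
      intro h
      cases h with
      | cannot _ hno =>
        have hz : ∀ x ∈ G, x = 0 := by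
          intro x hx
          by_contra hx0
          exact hno ⟨_, x, hx, 0, by omega, rfl⟩
        have h1 : c1 G = 0 := c1_eq_zero (by rintro ⟨x, hx, hc⟩; have := hz x hx; omega)
        have h2 : c2 G = 0 := by
          simp only [c2, Multiset.card_eq_zero, Multiset.filter_eq_nil]
          intro a ha hc; have := hz a ha; omega
        exact ⟨by omega, by omega⟩
      | move _ G' hmv hW =>
        obtain ⟨n, hn, i, hi, rfl⟩ := hmv
        obtain ⟨e1, e2, e3⟩ := move_eqs hn i (n - 1 - i)
        have hPW : PW _ := ((ih _ (by omega)).2).1 hW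
        unfold PW at hPW; unfold PM
        rcases dcases n with ⟨hn3, hd⟩|⟨hn3, hd⟩|⟨hn3, hd⟩ <;>
          rcases dcases i with ⟨hi3, hd'⟩|⟨hi3, hd'⟩|⟨hi3, hd'⟩ <;>
          rcases dcases (n - 1 - i) with ⟨hj3, hd''⟩|⟨hj3, hd''⟩|⟨hj3, hd''⟩ <;>
          omega
    · -- PM → LeftWinsMover
      intro hPM
      unfold PM at hPM
      by_cases hA : ∃ x ∈ G, x % 3 = 1
      · obtain ⟨n, hn, h3⟩ := hA
        refine LeftWinsMover.move _ (addStrip (addStrip (G.erase n) 0) (n - 1 - 0))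
          ⟨n, hn, 0, by omega, rfl⟩ ?_
        obtain ⟨e1, e2, e3⟩ := move_eqs hn 0 (n - 1 - 0)
        refine ((ih _ (by omega)).2).2 ?_
        unfold PW
        rcases dcases n with ⟨hn3, hd⟩|⟨hn3, hd⟩|⟨hn3, hd⟩ <;>
          rcases dcases 0 with ⟨hi3, hd'⟩|⟨hi3, hd'⟩|⟨hi3, hd'⟩ <;>
          rcases dcases (n - 1 - 0) with ⟨hj3, hd''⟩|⟨hj3, hd''⟩|⟨hj3, hd''⟩ <;>
          omega
      · by_cases hB : ∃ x ∈ G, x % 3 = 2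
        · obtain ⟨n, hn, h3⟩ := hB
          have hc1 : c1 G = 0 := c1_eq_zero hA
          have hc2 : 1 ≤ c2 G := one_le_c2 hn h3
          refine LeftWinsMover.move _ (addStrip (addStrip (G.erase n) 0) (n - 1 - 0))
            ⟨n, hn, 0, by omega, rfl⟩ ?_
          obtain ⟨e1, e2, e3⟩ := move_eqs hn 0 (n - 1 - 0)
          refine ((ih _ (by omega)).2).2 ?_
          unfold PW
          rcases dcases n with ⟨hn3, hd⟩|⟨hn3, hd⟩|⟨hn3, hd⟩ <;>
            rcases dcases 0 with ⟨hi3, hd'⟩|⟨hi3, hd'⟩|⟨hi3, hd'⟩ <;>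
            rcases dcases (n - 1 - 0) with ⟨hj3, hd''⟩|⟨hj3, hd''⟩|⟨hj3, hd''⟩ <;>
            omega
        · by_cases hC : ∃ x ∈ G, 1 ≤ x
          · obtain ⟨n, hn, h1⟩ := hC
            have h3 : n % 3 = 0 := by
              have t1 : n % 3 ≠ 1 := fun hc => hA ⟨n, hn, hc⟩
              have t2 : n % 3 ≠ 2 := fun hc => hB ⟨n, hn, hc⟩
              omega
            refine LeftWinsMover.move _ (addStrip (addStrip (G.erase n) 0) (n - 1 - 0))
              ⟨n, hn, 0, by omega, rfl⟩ ?_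
            obtain ⟨e1, e2, e3⟩ := move_eqs hn 0 (n - 1 - 0)
            refine ((ih _ (by omega)).2).2 ?_
            unfold PW
            rcases dcases n with ⟨hn3, hd⟩|⟨hn3, hd⟩|⟨hn3, hd⟩ <;>
              rcases dcases 0 with ⟨hi3, hd'⟩|⟨hi3, hd'⟩|⟨hi3, hd'⟩ <;>
              rcases dcases (n - 1 - 0) with ⟨hj3, hd''⟩|⟨hj3, hd''⟩|⟨hj3, hd''⟩ <;>
              omega
          · refine LeftWinsMover.cannot _ ?_
            rintro ⟨G', n, hn, i, hi, -⟩
            exact hC ⟨n, hn, by omega⟩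
    · -- LeftWinsWaiter → PW
      intro h
      cases h with
      | intro _ hex hall =>
        obtain ⟨G₀, n, hn, i0, hi0, -⟩ := hex
        have h3 : n % 3 = 0 ∨ n % 3 = 1 ∨ n % 3 = 2 := by omega
        unfold PW
        rcases h3 with h3|h3|h3
        · -- use i = 0, pieces 0 and n-2 (≡1)
          have hPM : PM _ := ((ih _ ?_).1).1 (hall _ ⟨n, hn, 0, by omega, rfl⟩)
          · obtain ⟨e1, e2, e3⟩ := move_eqs hn 0 (n - 2 - 0)
            unfold PM at hPM
            rcases dcases n with ⟨hn3, hd⟩|⟨hn3, hd⟩|⟨hn3, hd⟩ <;>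
              rcases dcases 0 with ⟨hi3, hd'⟩|⟨hi3, hd'⟩|⟨hi3, hd'⟩ <;>
              rcases dcases (n - 2 - 0) with ⟨hj3, hd''⟩|⟨hj3, hd''⟩|⟨hj3, hd''⟩ <;>
              omega
          · obtain ⟨e1, e2, e3⟩ := move_eqs hn 0 (n - 2 - 0)
            omega
        · -- n ≡ 1, n ≥ 4: use i = 1, pieces 1 and n-3 (both ≡1)
          have hPM : PM _ := ((ih _ ?_).1).1 (hall _ ⟨n, hn, 1, by omega, rfl⟩)
          · obtain ⟨e1, e2, e3⟩ := move_eqs hn 1 (n - 2 - 1)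
            unfold PM at hPM
            rcases dcases n with ⟨hn3, hd⟩|⟨hn3, hd⟩|⟨hn3, hd⟩ <;>
              rcases dcases 1 with ⟨hi3, hd'⟩|⟨hi3, hd'⟩|⟨hi3, hd'⟩ <;>
              rcases dcases (n - 2 - 1) with ⟨hj3, hd''⟩|⟨hj3, hd''⟩|⟨hj3, hd''⟩ <;>
              omega
          · obtain ⟨e1, e2, e3⟩ := move_eqs hn 1 (n - 2 - 1)
            omega
        · -- n ≡ 2: use i = 0, pieces 0 and n-2 (≡0)
          have hPM : PM _ := ((ih _ ?_).1).1 (hall _ ⟨n, hn, 0, by omega, rfl⟩)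
          · obtain ⟨e1, e2, e3⟩ := move_eqs hn 0 (n - 2 - 0)
            unfold PM at hPM
            rcases dcases n with ⟨hn3, hd⟩|⟨hn3, hd⟩|⟨hn3, hd⟩ <;>
              rcases dcases 0 with ⟨hi3, hd'⟩|⟨hi3, hd'⟩|⟨hi3, hd'⟩ <;>
              rcases dcases (n - 2 - 0) with ⟨hj3, hd''⟩|⟨hj3, hd''⟩|⟨hj3, hd''⟩ <;>
              omega
          · obtain ⟨e1, e2, e3⟩ := move_eqs hn 0 (n - 2 - 0)
            omega
    · -- PW → LeftWinsWaiter
      intro hPW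
      have hc2 : 1 ≤ c2 G := by unfold PW at hPW; omega
      obtain ⟨n, hn, h3⟩ := exists_of_c2 hc2
      refine LeftWinsWaiter.intro _ ⟨_, n, hn, 0, by omega, rfl⟩ ?_
      rintro G' ⟨m, hm, i, hi, rfl⟩
      obtain ⟨e1, e2, e3⟩ := move_eqs hm i (m - 2 - i)
      refine ((ih _ (by omega)).1).2 ?_
      unfold PW at hPW; unfold PM
      rcases dcases m with ⟨hn3, hd⟩|⟨hn3, hd⟩|⟨hn3, hd⟩ <;>
        rcases dcases i with ⟨hi3, hd'⟩|⟨hi3, hd'⟩|⟨hi3, hd'⟩ <;>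
        rcases dcases (m - 2 - i) with ⟨hj3, hd''⟩|⟨hj3, hd''⟩|⟨hj3, hd''⟩ <;>
        omega

theorem kayles_strip_multiple_of_three_equiv_zero (n : ℕ) (h : n % 3 = 0) :
    ∀ X : Multiset ℕ, 0 ∉ X → outcome (addStrip X n) = outcome X := by
  intro X _
  have hd1 : d1 n = 0 := by simp [d1, h]
  have hd2 : d2 n = 0 := by simp [d2, h]
  have h1 : c1 (addStrip X n) = c1 X := by rw [c1_addStrip, hd1, Nat.zero_add]
  have h2 : c2 (addStrip X n) = c2 X := by rw [c2_addStrip, hd2, Nat.zero_add]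
  have hs : (addStrip X n).sum = n + X.sum := sum_addStrip X n
  have m1 := main ((addStrip X n).sum + 1) (addStrip X n) (by omega)
  have m2 := main (X.sum + 1) X (by omega)
  have e1 : LeftWinsMover (addStrip X n) ↔ LeftWinsMover X := by
    rw [m1.1, m2.1]; unfold PM; rw [h1, h2]
  have e2 : LeftWinsWaiter (addStrip X n) ↔ LeftWinsWaiter X := by
    rw [m1.2, m2.2]; unfold PW; rw [h1, h2]
  simp only [outcome]
  by_cases hM : LeftWinsMover X
  · rw [if_pos (e1.mpr hM), if_pos hM]
    by_cases hW : LeftWinsWaiter X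
    · rw [if_pos (e2.mpr hW), if_pos hW]
    · rw [if_neg (fun c => hW (e2.mp c)), if_neg hW]
  · rw [if_neg (fun c => hM (e1.mp c)), if_neg hM]
    by_cases hW : LeftWinsWaiter X
    · rw [if_pos (e2.mpr hW), if_pos hW]
    · rw [if_neg (fun c => hW (e2.mp c)), if_neg hW]
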